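/- In a simplicial abelian group of the form DK(Y), the subgroup D of degenerate simplices is a flat cleavage for the projection to the point: if w ∈ D_{n+1} satisfies s_k(w) ∈ D_k for all k > 0 and d_i(w) ∈ D_n for all i > 0, then d_0(w) ∈ D_n. -/
import Mathlib


open CategoryTheory SimplexCategory

variable (Y : ℕ → Type) [∀ k, AddCommGroup (Y k)]

/-- Indices of the DK direct sum: injective order-preserving maps `[k] → [n]` with `α 0 = 0`. -/
def DKIdx (n : ℕ) : Type :=
  {p : Σ k : ℕ, SimplexCategory.mk k ⟶ SimplexCategory.mk n //
    Function.Injective p.2.toOrderHom ∧ p.2.toOrderHom 0 = 0}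

/-- The `n`-simplex abelian group `DK(Y)_n = ⊕_α Y_k`. -/
def DK (n : ℕ) : Type := ∀ p : DKIdx n, Y p.1.1

instance (n : ℕ) : AddCommGroup (DK Y n) :=
  inferInstanceAs (AddCommGroup (∀ p : DKIdx n, Y p.1.1))

/-- Projection `π_γ`, with the convention `π_γ = 0` for `γ` not injective (or not 0-preserving). -/
def DKproj {n l : ℕ} (γ : SimplexCategory.mk l ⟶ SimplexCategory.mk n) (x : DK Y n) : Y l :=
  if h : Function.Injective γ.toOrderHom ∧ γ.toOrderHom 0 = 0 then x ⟨⟨l, γ⟩, h⟩ else 0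

/-- Pullback `θ^*` along an order map, defined by `π_β θ^* = π_{θ∘β}`. -/
def DKpull {m n : ℕ} (θ : SimplexCategory.mk m ⟶ SimplexCategory.mk n) (x : DK Y n) : DK Y m :=
  fun p => DKproj Y (p.1.2 ≫ θ) x

/-- The map `θ' : [m+1] → [n+1]`, `θ'(0)=0`, `θ'(i+1)=θ(i)+1`, on monotone maps. -/
def primeFun {m n : ℕ} (θ : Fin (m + 1) →o Fin (n + 1)) : Fin (m + 2) →o Fin (n + 2) where
  toFun i := if h : (i : ℕ) = 0 then 0 else
    ⟨((θ ⟨(i : ℕ) - 1, by have := i.isLt; omega⟩ : Fin (n + 1)) : ℕ) + 1, by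
      have := (θ ⟨(i : ℕ) - 1, by have := i.isLt; omega⟩).isLt; omega⟩
  monotone' := by
    intro a b hab
    dsimp only
    by_cases ha : (a : ℕ) = 0
    · by_cases hb : (b : ℕ) = 0 <;> simp [ha, hb, Fin.le_def]
    · have hb : (b : ℕ) ≠ 0 := by have := Fin.le_def.mp hab; omega
      rw [dif_neg ha, dif_neg hb]
      have h2 : (⟨(a : ℕ) - 1, by have := a.isLt; omega⟩ : Fin (m + 1)) ≤
          ⟨(b : ℕ) - 1, by have := b.isLt; omega⟩ := by
        have := Fin.le_def.mp hab; simp [Fin.le_def]; omega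
      have := θ.monotone h2
      simp only [Fin.le_def] at this ⊢
      omega

/-- The map `θ' : [m+1] ⟶ [n+1]` in the simplex category. -/
def DKprime {m n : ℕ} (θ : SimplexCategory.mk m ⟶ SimplexCategory.mk n) :
    SimplexCategory.mk (m + 1) ⟶ SimplexCategory.mk (n + 1) :=
  SimplexCategory.mkHom (primeFun θ.toOrderHom)

/-- The zeroth face of `DK(Y)`:
`π_β d_0 = ∂ π_{β'} − Σ_{i=1}^{l+1} (−1)^i π_{β' δ_i}`. -/
def DKd0 (D : ∀ k, Y (k + 1) →+ Y k) {n : ℕ} (x : DK Y (n + 1)) : DK Y n :=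
  fun p =>
    D p.1.1 (DKproj Y (DKprime p.1.2) x) -
      ∑ j : Fin (p.1.1 + 1), ((-1 : ℤ) ^ ((j : ℕ) + 1)) •
        DKproj Y (SimplexCategory.δ j.succ ≫ DKprime p.1.2) x

/-- The degeneracy `u_j` of `DK(Y)`, `π_β u_j = π_{υ_j β}`. -/
def DKu {n : ℕ} (j : Fin (n + 1)) (x : DK Y n) : DK Y (n + 1) :=
  DKpull Y (SimplexCategory.σ j) x

/-- The subgroup spanned by the degenerate simplices. -/
def Dsub : ∀ n, AddSubgroup (DK Y n)
  | 0 => ⊥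
  | (n + 1) => AddSubgroup.closure (⋃ j : Fin (n + 1), Set.range (DKu Y j))

/-- The initial inclusion `σ_k : [k] → [n]`. -/
def initialIncl (k n : ℕ) (h : k ≤ n) : SimplexCategory.mk k ⟶ SimplexCategory.mk n :=
  SimplexCategory.mkHom
    ⟨fun i => ⟨(i : ℕ), by have := i.isLt; omega⟩,
     fun a b hab => by simp only [Fin.le_def] at hab ⊢; omega⟩

/-- The final inclusion `τ_k : [k] → [n]`, `i ↦ i + (n − k)`. -/
def finalIncl (k n : ℕ) (h : k ≤ n) : SimplexCategory.mk k ⟶ SimplexCategory.mk n :=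
  SimplexCategory.mkHom
    ⟨fun i => ⟨(i : ℕ) + (n - k), by have := i.isLt; omega⟩,
     fun a b hab => by simp only [Fin.le_def] at hab ⊢; omega⟩


section Aux

lemma Fin.predAbove_coe {n : ℕ} (j : Fin (n + 1)) (a : Fin (n + 2)) :
    ((j.predAbove a : Fin (n + 1)) : ℕ) = if (a : ℕ) ≤ (j : ℕ) then (a : ℕ) else (a : ℕ) - 1 := by
  by_cases h : (j : ℕ) < (a : ℕ)
  · rw [Fin.predAbove, dif_pos (by simpa [Fin.lt_def] using h), if_neg (by omega), Fin.coe_pred]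
  · rw [Fin.predAbove, dif_neg (by simpa [Fin.lt_def] using h), if_pos (by omega),
      Fin.coe_castPred]

lemma Fin.succAbove_coe {n : ℕ} (t : Fin (n + 2)) (b : Fin (n + 1)) :
    ((t.succAbove b : Fin (n + 2)) : ℕ) = if (b : ℕ) < (t : ℕ) then (b : ℕ) else (b : ℕ) + 1 := by
  by_cases h : (b : ℕ) < (t : ℕ)
  · rw [Fin.succAbove, if_pos (by simpa [Fin.lt_def] using h), if_pos h, Fin.coe_castSucc]
  · rw [Fin.succAbove, if_neg (by simpa [Fin.lt_def] using h), if_neg h, Fin.val_succ]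

lemma sigma_app {n : ℕ} (j : Fin (n + 1)) (a : Fin (n + 2)) :
    (SimplexCategory.σ j).toOrderHom a = j.predAbove a := rfl

lemma delta_app {n : ℕ} (t : Fin (n + 2)) (b : Fin (n + 1)) :
    (SimplexCategory.δ t).toOrderHom b = t.succAbove b := rfl

lemma comp_app {l m n : SimplexCategory} (f : l ⟶ m) (g : m ⟶ n) (a : Fin (l.len + 1)) :
    (f ≫ g).toOrderHom a = g.toOrderHom (f.toOrderHom a) := rfl

/-- The identity index. -/
def idIdx (n : ℕ) : DKIdx n := ⟨⟨n, 𝟙 _⟩, fun _ _ h => h, rfl⟩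

lemma proj_id {n : ℕ} (x : DK Y n) : DKproj Y (𝟙 (SimplexCategory.mk n)) x = x (idIdx n) :=
  dif_pos (idIdx n).2

/-- Evaluation at an index, as an additive homomorphism. -/
def evalHom (n : ℕ) (p : DKIdx n) : DK Y n →+ Y p.1.1 where
  toFun x := x p
  map_zero' := rfl
  map_add' _ _ := rfl

lemma mem_Dsub_eval_id {n : ℕ} {x : DK Y n} (hx : x ∈ Dsub Y n) : x (idIdx n) = 0 := by
  cases n with
  | zero =>
    have h0 : x = 0 := AddSubgroup.mem_bot.mp hx
    rw [h0]; rfl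
  | succ n =>
    have hle : Dsub Y (n + 1) ≤ (evalHom Y (n + 1) (idIdx (n + 1))).ker := by
      rw [show Dsub Y (n + 1) =
          AddSubgroup.closure (⋃ j : Fin (n + 1), Set.range (DKu Y j)) from rfl,
        AddSubgroup.closure_le]
      rintro g hg
      simp only [Set.mem_iUnion, Set.mem_range] at hg
      obtain ⟨j, y, rfl⟩ := hg
      show DKu Y j y (idIdx (n + 1)) = 0
      show DKproj Y (𝟙 (SimplexCategory.mk (n + 1)) ≫ SimplexCategory.σ j) y = 0
      rw [Category.id_comp]
      refine dif_neg ?_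
      rintro ⟨hinj, -⟩
      have hcs : (SimplexCategory.σ j).toOrderHom (Fin.castSucc j) =
          (SimplexCategory.σ j).toOrderHom (Fin.succ j) := by
        apply Fin.ext
        rw [sigma_app, sigma_app, Fin.predAbove_coe, Fin.predAbove_coe]
        simp
      have := hinj hcs
      have := congrArg Fin.val this
      simp at this
    exact hle hx

lemma idx_eq_id (n : ℕ) (p : DKIdx n)
    (hsurj : ∀ t : Fin (n + 1), ∃ i, p.1.2.toOrderHom i = t) : p = idIdx n := by
  obtain ⟨⟨k, β⟩, hβ⟩ := p
  have hk : k = n := by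
    have hb : Function.Bijective β.toOrderHom := ⟨hβ.1, fun t => hsurj t⟩
    have hc := Fintype.card_of_bijective hb
    simpa using hc
  subst hk
  have hβid : β = 𝟙 (SimplexCategory.mk k) := by
    have : Mono β := SimplexCategory.mono_iff_injective.mpr hβ.1
    exact SimplexCategory.eq_id_of_mono β
  subst hβid
  rfl

lemma DKprime_id (n : ℕ) :
    DKprime (𝟙 (SimplexCategory.mk n)) = 𝟙 (SimplexCategory.mk (n + 1)) := by
  apply SimplexCategory.Hom.ext'
  apply OrderHom.ext
  funext i
  show primeFun (SimplexCategory.Hom.toOrderHom (𝟙 (SimplexCategory.mk n))) i = i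
  apply Fin.ext
  simp only [primeFun, OrderHom.coe_mk]
  split_ifs with h
  · simp [h]
  · show (i : ℕ) - 1 + 1 = (i : ℕ)
    omega

lemma keyLemma (N m : ℕ) (hm : m ≤ N) (x : DK Y N)
    (hx : ∀ p : DKIdx N,
      (∀ t : Fin (N + 1), 0 < (t : ℕ) → (t : ℕ) ≤ m → ∃ i, p.1.2.toOrderHom i = t) → x p = 0) :
    x ∈ Dsub Y N := by
  induction m generalizing x with
  | zero =>
    have h0 : x = 0 := funext fun p => hx p (fun t h1 h2 => absurd (h1.trans_le h2) (by omega))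
    rw [h0]; exact zero_mem _
  | succ m ih =>
    obtain ⟨n, rfl⟩ : ∃ n, N = n + 1 := ⟨N - 1, by omega⟩
    have hmn : m ≤ n := by omega
    let j : Fin (n + 1) := ⟨m, by omega⟩
    let t1 : Fin (n + 2) := ⟨m + 1, by omega⟩
    have hg : DKu Y j (DKpull Y (SimplexCategory.δ t1) x) ∈ Dsub Y (n + 1) :=
      AddSubgroup.subset_closure (Set.mem_iUnion.2 ⟨j, Set.mem_range_self _⟩)
    have key : ∀ p : DKIdx (n + 1),
        (∀ t : Fin (n + 2), 0 < (t : ℕ) → (t : ℕ) ≤ m → ∃ i, p.1.2.toOrderHom i = t) →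
        (x - DKu Y j (DKpull Y (SimplexCategory.δ t1) x)) p = 0 := by
      intro p hp
      show x p - DKu Y j (DKpull Y (SimplexCategory.δ t1) x) p = 0
      show x p - DKproj Y (p.1.2 ≫ SimplexCategory.σ j) (DKpull Y (SimplexCategory.δ t1) x) = 0
      by_cases hinj : Function.Injective (p.1.2 ≫ SimplexCategory.σ j).toOrderHom
      · have h0 : (p.1.2 ≫ SimplexCategory.σ j).toOrderHom 0 = 0 := by
          rw [comp_app, p.2.2]
          apply Fin.ext
          rw [sigma_app, Fin.predAbove_coe]
          simp
        rw [DKproj, dif_pos ⟨hinj, h0⟩]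
        show x p - DKproj Y ((p.1.2 ≫ SimplexCategory.σ j) ≫ SimplexCategory.δ t1) x = 0
        by_cases hmem : ∃ i, p.1.2.toOrderHom i = t1
        · exfalso
          obtain ⟨i0, hi0⟩ := hmem
          have hi0' : (p.1.2.toOrderHom i0 : ℕ) = m + 1 := by rw [hi0]
          have hm' : ∃ i1, (p.1.2.toOrderHom i1 : ℕ) = m := by
            rcases Nat.eq_zero_or_pos m with h | h
            · refine ⟨0, ?_⟩
              rw [p.2.2]
              simp [h]
            · obtain ⟨i1, hi1⟩ := hp ⟨m, by omega⟩ (by simpa) (by simp)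
              exact ⟨i1, by rw [hi1]⟩
          obtain ⟨i1, hi1⟩ := hm'
          have hne : i0 ≠ i1 := by
            intro h
            rw [h, hi1] at hi0'
            omega
          apply hne
          apply hinj
          apply Fin.ext
          rw [comp_app, comp_app, sigma_app, sigma_app, Fin.predAbove_coe, Fin.predAbove_coe,
            hi0', hi1]
          show (if m + 1 ≤ m then m + 1 else m + 1 - 1) = if m ≤ m then m else m - 1
          simp
        · have hcomp : (p.1.2 ≫ SimplexCategory.σ j) ≫ SimplexCategory.δ t1 = p.1.2 := by
            apply SimplexCategory.Hom.ext'
            apply OrderHom.ext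
            funext a
            apply Fin.ext
            rw [comp_app, comp_app, sigma_app, delta_app]
            rw [Fin.succAbove_coe]
            rw [Fin.predAbove_coe]
            have hne : (p.1.2.toOrderHom a : ℕ) ≠ m + 1 := by
              intro h
              exact hmem ⟨a, Fin.ext h⟩
            have hlt : (p.1.2.toOrderHom a : ℕ) < n + 2 := (p.1.2.toOrderHom a).isLt
            show (if (if (p.1.2.toOrderHom a : ℕ) ≤ m then (p.1.2.toOrderHom a : ℕ)
                else (p.1.2.toOrderHom a : ℕ) - 1) < m + 1 then
                (if (p.1.2.toOrderHom a : ℕ) ≤ m then (p.1.2.toOrderHom a : ℕ)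
                else (p.1.2.toOrderHom a : ℕ) - 1)
              else (if (p.1.2.toOrderHom a : ℕ) ≤ m then (p.1.2.toOrderHom a : ℕ)
                else (p.1.2.toOrderHom a : ℕ) - 1) + 1) = (p.1.2.toOrderHom a : ℕ)
            split_ifs <;> omega
          rw [hcomp, DKproj, dif_pos p.2]
          exact sub_self _
      · rw [DKproj, dif_neg (fun h => hinj h.1), sub_zero]
        apply hx p
        intro t ht1 ht2
        rcases Nat.lt_or_ge (t : ℕ) (m + 1) with h | h
        · exact hp t ht1 (by omega)
        · have hteq : (t : ℕ) = m + 1 := by omega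
          obtain ⟨a, b, hab, hne⟩ := Function.not_injective_iff.mp hinj
          have hβne : (p.1.2.toOrderHom a : ℕ) ≠ (p.1.2.toOrderHom b : ℕ) := by
            intro h'
            exact hne (p.2.1 (Fin.ext h'))
          have hvals := congrArg Fin.val hab
          rw [comp_app, comp_app, sigma_app, sigma_app, Fin.predAbove_coe, Fin.predAbove_coe]
            at hvals
          have hja : (j : ℕ) = m := rfl
          rw [hja] at hvals
          have hla : (p.1.2.toOrderHom a : ℕ) < n + 2 := (p.1.2.toOrderHom a).isLt
          have hlb : (p.1.2.toOrderHom b : ℕ) < n + 2 := (p.1.2.toOrderHom b).isLt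
          have : (p.1.2.toOrderHom a : ℕ) = m + 1 ∨ (p.1.2.toOrderHom b : ℕ) = m + 1 := by
            split_ifs at hvals <;> omega
          rcases this with h' | h'
          · exact ⟨a, Fin.ext (by rw [h', hteq])⟩
          · exact ⟨b, Fin.ext (by rw [h', hteq])⟩
    have hr : x - DKu Y j (DKpull Y (SimplexCategory.δ t1) x) ∈ Dsub Y (n + 1) :=
      ih (by omega) _ key
    have hxeq : x = DKu Y j (DKpull Y (SimplexCategory.δ t1) x) +
        (x - DKu Y j (DKpull Y (SimplexCategory.δ t1) x)) := by abel
    rw [hxeq]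
    exact add_mem hg hr

end Aux

/-- in `DK(Y)` the degenerate subgroups form a flat cleavage for the
projection to the point: if `w ∈ D_{n+1}`, `s_k(w) ∈ D_k` for all `k > 0` and
`d_i(w) ∈ D_n` for all `i > 0`, then `d_0(w) ∈ D_n`. -/
theorem stmt11 (D : ∀ k, Y (k + 1) →+ Y k)
    (hD : ∀ (k : ℕ) (y : Y (k + 2)), D k (D (k + 1) y) = 0)
    (n : ℕ) (w : DK Y (n + 1))
    (hw : w ∈ Dsub Y (n + 1))
    (hs : ∀ (k : ℕ) (hk : k + 1 ≤ n + 1),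
      DKpull Y (initialIncl (k + 1) (n + 1) hk) w ∈ Dsub Y (k + 1))
    (hd : ∀ i : Fin (n + 1), DKpull Y (SimplexCategory.δ i.succ) w ∈ Dsub Y n) :
    DKd0 Y D w ∈ Dsub Y n := by
  apply keyLemma Y n n le_rfl
  intro p hp
  have hpid : p = idIdx n := by
    apply idx_eq_id
    intro t
    rcases Nat.eq_zero_or_pos (t : ℕ) with h | h
    · exact ⟨0, by rw [p.2.2]; exact Fin.ext h.symm⟩
    · exact hp t h (by omega)
  subst hpid
  show D n (DKproj Y (DKprime (𝟙 (SimplexCategory.mk n))) w) -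
      ∑ j : Fin (n + 1), ((-1 : ℤ) ^ ((j : ℕ) + 1)) •
        DKproj Y (SimplexCategory.δ j.succ ≫ DKprime (𝟙 (SimplexCategory.mk n))) w = 0
  rw [DKprime_id]
  have h1 : DKproj Y (𝟙 (SimplexCategory.mk (n + 1))) w = 0 := by
    rw [proj_id]; exact mem_Dsub_eval_id Y hw
  have h2 : ∀ jj : Fin (n + 1),
      DKproj Y (SimplexCategory.δ jj.succ : SimplexCategory.mk n ⟶ _) w = 0 := by
    intro jj
    have h3 := mem_Dsub_eval_id Y (hd jj)
    have h4 : DKproj Y (𝟙 (SimplexCategory.mk n) ≫ SimplexCategory.δ jj.succ) w = 0 := h3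
    rwa [Category.id_comp] at h4
  simp only [h1, map_zero, Category.comp_id, h2, smul_zero, Finset.sum_const_zero, sub_zero]
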